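/- Let $\pi = \pi_{k,n}$ (so $\pi(x) = x + (n-k) \bmod n$) and let $A \subseteq [n]$ with $|A| \le k-1$. Then the decorated permutation $\sigma = \overleftarrow{\rho_A}(\pi)$ obtained by freezing the values in $A$ and cyclically shifting the remaining values one place to the left (decorating new fixed points as underlined) has exactly $k-1$ weak 1-excedances; specifically $W_1(\sigma) = [k] \setminus \{j\}$ where $j = \max\{ i \in [k] : \pi(i) \notin A \}$. -/

import Mathlib

open Fin.NatCast in
/-- The cyclic interval `{a, a+1, ..., a+l-1}` in `Fin n` (taken mod `n`). -/
def cycInterval {n : ℕ} [NeZero n] (a : Fin n) (l : ℕ) : Finset (Fin n) :=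
  (Finset.range l).image fun t : ℕ => a + (t : Fin n)

open Fin.NatCast in
/-- The decorated permutation `π_{k,n}` of `U_{k,n}`: `i ↦ i + (n-k) (mod n)`. -/
def piU (n k : ℕ) [NeZero n] : Equiv.Perm (Fin n) :=
  Equiv.addRight (((n - k : ℕ)) : Fin n)

/-- The cyclic `i`-order on `Fin n`: `a <_i b` iff `a - i < b - i`. -/
def ltI {n : ℕ} [NeZero n] (i a b : Fin n) : Prop := a - i < b - i

/-- The set of weak `i`-excedances of `σ` with decoration `D`
(`D j = true` meaning an overlined fixed point `j`). -/
noncomputable def weakExcSet {n : ℕ} [NeZero n] (σ : Fin n → Fin n) (D : Fin n → Bool)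
    (i : Fin n) : Finset (Fin n) :=
  by classical exact Finset.univ.filter fun j => (σ j = j ∧ D j = true) ∨ ltI i j (σ j)

open Fin.NatCast in
/-- The next position after `p` (cyclically) not belonging to the frozen set `F`. -/
noncomputable def nextFree {n : ℕ} [NeZero n] (F : Finset (Fin n)) (p : Fin n) : Fin n :=
  p + ((sInf {t : ℕ | 1 ≤ t ∧ p + (t : Fin n) ∉ F} : ℕ) : Fin n)

open Fin.NatCast in
/-- The previous position before `p` (cyclically) not belonging to the frozen set `F`. -/
noncomputable def prevFree {n : ℕ} [NeZero n] (F : Finset (Fin n)) (p : Fin n) : Fin n :=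
  p - ((sInf {t : ℕ | 1 ≤ t ∧ p - (t : Fin n) ∉ F} : ℕ) : Fin n)

/-- `ρ←_A(π)`: freeze the values in `A` and cyclically shift the remaining values one
place to the left (skipping frozen positions). -/
noncomputable def rhoL {n : ℕ} [NeZero n] (π : Equiv.Perm (Fin n)) (A : Finset (Fin n)) :
    Fin n → Fin n :=
  fun p => if π p ∈ A then π p
    else π (nextFree (Finset.univ.filter fun q => π q ∈ A) p)

/-- `ρ→_A(π)`: freeze the values in `A` and cyclically shift the remaining values one
place to the right (skipping frozen positions). -/
noncomputable def rhoR {n : ℕ} [NeZero n] (π : Equiv.Perm (Fin n)) (A : Finset (Fin n)) :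
    Fin n → Fin n :=
  fun p => if π p ∈ A then π p
    else π (prevFree (Finset.univ.filter fun q => π q ∈ A) p)


section aux
variable {n k : ℕ} [NeZero n]
open Fin.NatCast

lemma fin_add_nat_val (p : Fin n) (t : ℕ) : (p + (t : Fin n)).val = (p.val + t) % n := by
  rw [Fin.add_def]
  simp only [Fin.val_natCast]
  rw [Nat.add_mod_mod]

lemma piu_val (p : Fin n) :
    ((Equiv.addRight (((n - k : ℕ)) : Fin n)) p).val = (p.val + (n - k)) % n := by
  show (p + ((n - k : ℕ) : Fin n)).val = _
  exact fin_add_nat_val p (n - k)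

lemma piu_val_lt (hkn : k ≤ n) (p : Fin n) (hp : p.val < k) :
    ((Equiv.addRight (((n - k : ℕ)) : Fin n)) p).val = p.val + (n - k) := by
  rw [piu_val, Nat.mod_eq_of_lt (by omega)]

lemma piu_val_ge (hk : 0 < k) (hkn : k ≤ n) (p : Fin n) (hp : k ≤ p.val) :
    ((Equiv.addRight (((n - k : ℕ)) : Fin n)) p).val = p.val - k := by
  have hpn := p.isLt
  have h1 : p.val + (n - k) = (p.val - k) + n := by omega
  rw [piu_val, h1, Nat.add_mod_right, Nat.mod_eq_of_lt (by omega)]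

lemma nextFree_spec (F : Finset (Fin n)) (p : Fin n) (hp : p ∉ F) :
    ∃ t : ℕ, 1 ≤ t ∧ t ≤ n ∧ nextFree F p = p + (t : Fin n) ∧ p + (t : Fin n) ∉ F ∧
      ∀ s : ℕ, 1 ≤ s → s < t → p + (s : Fin n) ∈ F := by
  have hnS : n ∈ {t : ℕ | 1 ≤ t ∧ p + (t : Fin n) ∉ F} := by
    show 1 ≤ n ∧ p + ((n : ℕ) : Fin n) ∉ F
    refine ⟨Nat.one_le_iff_ne_zero.2 (NeZero.ne n), ?_⟩
    have h0 : ((n : ℕ) : Fin n) = 0 := by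
      ext
      simp [Fin.val_natCast]
    rw [h0, add_zero]; exact hp
  have hne : {t : ℕ | 1 ≤ t ∧ p + (t : Fin n) ∉ F}.Nonempty := ⟨n, hnS⟩
  have hmem := Nat.sInf_mem hne
  rw [Set.mem_setOf_eq] at hmem
  refine ⟨_, hmem.1, Nat.sInf_le hnS, rfl, hmem.2, ?_⟩
  intro s hs1 hst
  by_contra hcon
  have : s ∈ {t : ℕ | 1 ≤ t ∧ p + (t : Fin n) ∉ F} := ⟨hs1, hcon⟩
  exact absurd (Nat.sInf_le this) (by omega)

lemma count_frozen (F : Finset (Fin n)) (p : Fin n) (t : ℕ) (htn : t ≤ n)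
    (hall : ∀ s : ℕ, 1 ≤ s → s < t → p + (s : Fin n) ∈ F) : t - 1 ≤ F.card := by
  have hsub : (Finset.Ico 1 t).image (fun s : ℕ => p + (s : Fin n)) ⊆ F := by
    intro x hx
    simp only [Finset.mem_image, Finset.mem_Ico] at hx
    obtain ⟨s, ⟨h1, h2⟩, rfl⟩ := hx
    exact hall s h1 h2
  have hinj : Set.InjOn (fun s : ℕ => p + (s : Fin n)) (Finset.Ico 1 t) := by
    intro a ha b hb hab
    simp only [Finset.coe_Ico, Set.mem_Ico] at ha hb
    have h3 : (a : Fin n) = (b : Fin n) := add_left_cancel hab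
    have h4 := congrArg Fin.val h3
    rw [Fin.val_natCast, Fin.val_natCast, Nat.mod_eq_of_lt (by omega),
      Nat.mod_eq_of_lt (by omega)] at h4
    exact h4
  calc t - 1 = (Finset.Ico 1 t).card := by rw [Nat.card_Ico]
    _ = ((Finset.Ico 1 t).image (fun s : ℕ => p + (s : Fin n))).card :=
        (Finset.card_image_of_injOn hinj).symm
    _ ≤ F.card := Finset.card_le_card hsub

omit [NeZero n] in
lemma card_filter_perm (π : Equiv.Perm (Fin n)) (A : Finset (Fin n)) :
    (Finset.univ.filter fun q : Fin n => π q ∈ A).card = A.card := by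
  apply Finset.card_bij (fun q _ => π q)
  · intro a ha; exact (Finset.mem_filter.1 ha).2
  · intro a _ b _ h; exact π.injective h
  · intro b hb
    exact ⟨π.symm b, Finset.mem_filter.2 ⟨Finset.mem_univ _, by simpa using hb⟩, by simp⟩

omit [NeZero n] in
lemma card_val_lt (hkn : k ≤ n) :
    (Finset.univ.filter fun i : Fin n => i.val < k).card = k := by
  rw [← Finset.card_range k]
  apply Finset.card_bij (fun i _ => i.val)
  · intro a ha; simpa using (Finset.mem_filter.1 ha).2
  · intro a _ b _ h; exact Fin.val_injective h
  · intro b hb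
    simp only [Finset.mem_range] at hb
    exact ⟨⟨b, lt_of_lt_of_le hb hkn⟩, by simp [hb], rfl⟩

lemma ltI_zero (a b : Fin n) : ltI 0 a b ↔ a < b := by
  simp [ltI]

end aux

open Fin.NatCast in
/-- for `A ⊆ [n]` with `|A| ≤ k - 1`, the decorated permutation
`σ = ρ←_A(π_{k,n})` satisfies `W_1(σ) = [k] \ {j}`, where
`j = max{ i ∈ [k] : π_{k,n}(i) ∉ A }`; in particular `σ` has exactly `k - 1` weak
1-excedances.  (New fixed points are underlined; only frozen old fixed points keep an
overline.) -/
theorem rhoL_weak_excedances (n k : ℕ) [NeZero n] (hk : 0 < k) (hkn : k ≤ n)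
    (A : Finset (Fin n)) (hA : A.card ≤ k - 1) :
    ∃ j : Fin n, (j.val < k ∧ piU n k j ∉ A) ∧
      (∀ i : Fin n, i.val < k → piU n k i ∉ A → i ≤ j) ∧
      weakExcSet (rhoL (piU n k) A) (fun p => decide (piU n k p = p ∧ piU n k p ∈ A)) 0 =
        (Finset.univ.filter fun i : Fin n => i.val < k).erase j ∧
      (weakExcSet (rhoL (piU n k) A)
        (fun p => decide (piU n k p = p ∧ piU n k p ∈ A)) 0).card = k - 1 := by
  classical
  have hpiu : piU n k = Equiv.addRight (((n - k : ℕ)) : Fin n) := rfl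
  set F : Finset (Fin n) := Finset.univ.filter (fun q => piU n k q ∈ A) with hF
  have hFcard : F.card ≤ k - 1 := by
    rw [hF, card_filter_perm]; exact hA
  set T : Finset (Fin n) := Finset.univ.filter (fun i => i.val < k ∧ piU n k i ∉ A) with hT
  have hTne : T.Nonempty := by
    rw [Finset.nonempty_iff_ne_empty]
    intro h
    have hsub : (Finset.univ.filter fun i : Fin n => i.val < k) ⊆ F := by
      intro i hi
      have hik : i.val < k := (Finset.mem_filter.1 hi).2
      by_cases hiA : piU n k i ∈ A
      · rw [hF, Finset.mem_filter]; exact ⟨Finset.mem_univ _, hiA⟩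
      · exfalso
        have : i ∈ T := by
          rw [hT, Finset.mem_filter]; exact ⟨Finset.mem_univ _, hik, hiA⟩
        rw [h] at this
        exact absurd this (Finset.notMem_empty i)
    have := Finset.card_le_card hsub
    rw [card_val_lt hkn] at this
    omega
  set j := T.max' hTne with hj
  have hjT : j ∈ T := T.max'_mem hTne
  have hjmax : ∀ i ∈ T, i ≤ j := fun i hi => T.le_max' i hi
  rw [hT, Finset.mem_filter] at hjT
  obtain ⟨-, hjk, hjA⟩ := hjT
  have hmax : ∀ i : Fin n, i.val < k → piU n k i ∉ A → i ≤ j := by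
    intro i hik hiA
    refine hjmax i ?_
    rw [hT, Finset.mem_filter]
    exact ⟨Finset.mem_univ _, hik, hiA⟩
  -- the key characterization
  have key : ∀ p : Fin n, p ∈ weakExcSet (rhoL (piU n k) A)
      (fun p => decide (piU n k p = p ∧ piU n k p ∈ A)) 0 ↔ (p.val < k ∧ p ≠ j) := by
    intro p
    have hpn := p.isLt
    rw [weakExcSet]
    simp only [Finset.mem_filter, Finset.mem_univ, true_and, ltI_zero, decide_eq_true_eq]
    by_cases hp : piU n k p ∈ A
    · -- frozen position
      have hσ : rhoL (piU n k) A p = piU n k p := by simp [rhoL, hp]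
      have hpj : p ≠ j := by rintro rfl; exact hjA hp
      by_cases hpk : p.val < k
      · simp only [hpk, hpj, Ne, not_false_iff, and_true, iff_true, true_and]
        rcases Nat.eq_zero_or_pos (n - k) with hm | hm
        · left
          have hfix : piU n k p = p := by
            ext
            rw [hpiu, piu_val_lt hkn p hpk, hm, Nat.add_zero]
          rw [hσ]
          exact ⟨hfix, hfix, hp⟩
        · right
          rw [hσ, Fin.lt_def, hpiu, piu_val_lt hkn p hpk]
          omega
      · simp only [hpk, false_and, iff_false, not_or, not_and]
        have hval : (piU n k p).val = p.val - k := by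
          rw [hpiu]; exact piu_val_ge hk hkn p (by omega)
        constructor
        · intro hfix
          rw [hσ] at hfix
          have := congrArg Fin.val hfix
          rw [hval] at this
          omega
        · rw [hσ, Fin.lt_def, hval]
          omega
    · -- non-frozen position
      have hpF : p ∉ F := by
        rw [hF, Finset.mem_filter]
        exact fun h => hp h.2
      obtain ⟨t, ht1, htn, hnf, hqF, hall⟩ := nextFree_spec F p hpF
      have htk : t ≤ k := by
        have := count_frozen F p t htn hall
        omega
      set q : Fin n := p + ((t : ℕ) : Fin n) with hqdef
      have hqval : q.val = (p.val + t) % n := fin_add_nat_val p t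
      have hqA : piU n k q ∉ A := by
        intro hmem
        apply hqF
        rw [hF, Finset.mem_filter]
        exact ⟨Finset.mem_univ _, hmem⟩
      have hσ : rhoL (piU n k) A p = piU n k q := by
        rw [rhoL]
        simp only [hp, if_false]
        rw [← hF, hnf]
      have hD : ¬ (piU n k p = p ∧ piU n k p ∈ A) := fun h => hp h.2
      simp only [hD, and_false, false_or]
      have hqn := q.isLt
      by_cases hpk : p.val < k
      · by_cases hpj : p = j
        · rw [hpj]
          simp only [ne_eq, not_true_eq_false, and_false, iff_false, not_lt]
          rw [← hpj, hσ, Fin.le_def]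
          by_cases hw : p.val + t < n
          · -- no wrap: q.val = p.val + t, and necessarily q.val ≥ k
            have hqv : q.val = p.val + t := by rw [hqval, Nat.mod_eq_of_lt hw]
            have hqk : k ≤ q.val := by
              by_contra hcon
              have : q ≤ j := hmax q (by omega) hqA
              rw [Fin.le_def, ← hpj] at this
              omega
            rw [hpiu, piu_val_ge hk hkn q hqk]
            omega
          · have hqv : q.val = p.val + t - n := by
              rw [hqval, Nat.mod_eq_sub_mod (by omega), Nat.mod_eq_of_lt (by omega)]
            rw [hpiu, piu_val_lt hkn q (by omega)]
            omega
        · simp only [hpk, hpj, Ne, not_false_iff, and_true, true_and, iff_true]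
          have hplej : p ≤ j := hmax p hpk hp
          have hplj : p.val < j.val := lt_of_le_of_ne (Fin.le_def.1 hplej)
            (fun h => hpj (Fin.ext h))
          have htle : t ≤ j.val - p.val := by
            by_contra hcon
            have hs := hall (j.val - p.val) (by omega) (by omega)
            have hj2 : p + ((j.val - p.val : ℕ) : Fin n) = j := by
              ext
              rw [fin_add_nat_val, Nat.mod_eq_of_lt (by omega)]
              omega
            rw [hj2, hF, Finset.mem_filter] at hs
            exact hjA hs.2
          have hqv : q.val = p.val + t := by
            rw [hqval, Nat.mod_eq_of_lt (by omega)]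
          rw [hσ, Fin.lt_def, hpiu, piu_val_lt hkn q (by omega), hqv]
          omega
      · simp only [hpk, false_and, iff_false, not_lt]
        rw [hσ, Fin.le_def]
        by_cases hw : p.val + t < n
        · have hqv : q.val = p.val + t := by rw [hqval, Nat.mod_eq_of_lt hw]
          rw [hpiu, piu_val_ge hk hkn q (by omega)]
          omega
        · have hqv : q.val = p.val + t - n := by
            rw [hqval, Nat.mod_eq_sub_mod (by omega), Nat.mod_eq_of_lt (by omega)]
          rw [hpiu, piu_val_lt hkn q (by omega)]
          omega
  have heq : weakExcSet (rhoL (piU n k) A)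
      (fun p => decide (piU n k p = p ∧ piU n k p ∈ A)) 0 =
      (Finset.univ.filter fun i : Fin n => i.val < k).erase j := by
    ext p
    rw [key p, Finset.mem_erase, Finset.mem_filter]
    simp only [Finset.mem_univ, true_and]
    tauto
  refine ⟨j, ⟨hjk, hjA⟩, hmax, heq, ?_⟩
  rw [heq, Finset.card_erase_of_mem ?_, card_val_lt hkn]
  rw [Finset.mem_filter]
  exact ⟨Finset.mem_univ _, hjk⟩
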